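/- arXiv:2202.01391 — 2 statements merged into one kernel-verified Lean document; each statement's English description precedes it below -/
import Mathlib

section
/- Let f_1,…,f_ℓ be positive integers with f = Σ_j f_j, and let v ∈ ℕ^ℓ be 3-approximately fair. Let P be the residual profile after greedily removing a maximal number of fairlets from v, i.e., P = v − n₀·(f_1,…,f_ℓ) where n₀ = min_j ⌊v_j / f_j⌋. Then ‖P‖₁ < 4f. -/
open Finset

/-- Lemma 4.2: after greedily removing a maximal number of fairlets from a
3-approximately fair profile, fewer than `4f` (problematic) points remain. -/
theorem problematic_points_few {ℓ : ℕ} (hℓ : 0 < ℓ) (fvec : Fin ℓ → ℕ)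
    (hfvec : ∀ j, 0 < fvec j) (f : ℕ) (hf : f = ∑ j, fvec j)
    (v : Fin ℓ → ℕ)
    (hfair : ∀ j, |(v j : ℝ) - (fvec j : ℝ) / (f : ℝ) * (∑ i, v i : ℕ)| ≤ 3)
    (n₀ : ℕ)
    (hn₀ : n₀ = Finset.univ.inf' ⟨⟨0, hℓ⟩, Finset.mem_univ _⟩ (fun j => v j / fvec j))
    (P : Fin ℓ → ℕ) (hP : ∀ j, P j = v j - n₀ * fvec j) :
    ∑ j, P j < 4 * f := by
  have hfpos : 0 < f := by
    rw [hf]; exact Finset.sum_pos (fun j _ => hfvec j) ⟨⟨0, hℓ⟩, Finset.mem_univ _⟩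
  have hle : ∀ j, n₀ * fvec j ≤ v j := by
    intro j
    have h1 : n₀ ≤ v j / fvec j := by
      rw [hn₀]; exact Finset.inf'_le _ (Finset.mem_univ j)
    calc n₀ * fvec j ≤ (v j / fvec j) * fvec j := Nat.mul_le_mul_right _ h1
      _ ≤ v j := Nat.div_mul_le_self _ _
  obtain ⟨j₀, -, hj₀⟩ := Finset.exists_mem_eq_inf'
    (⟨⟨0, hℓ⟩, Finset.mem_univ _⟩ : (Finset.univ : Finset (Fin ℓ)).Nonempty)
    (fun j => v j / fvec j)
  have hn₀j : n₀ = v j₀ / fvec j₀ := by rw [hn₀, hj₀]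
  have hvj₀ : v j₀ < (n₀ + 1) * fvec j₀ := by
    rw [hn₀j]
    have h1 := Nat.div_add_mod (v j₀) (fvec j₀)
    have h2 := Nat.mod_lt (v j₀) (hfvec j₀)
    calc v j₀ = fvec j₀ * (v j₀ / fvec j₀) + v j₀ % fvec j₀ := h1.symm
      _ < fvec j₀ * (v j₀ / fvec j₀) + fvec j₀ := by omega
      _ = (v j₀ / fvec j₀ + 1) * fvec j₀ := by ring
  set V := ∑ i, v i with hV
  have key : V < (n₀ + 4) * f := by
    have h1 := (abs_le.mp (hfair j₀)).1
    have hfR : (0 : ℝ) < f := by exact_mod_cast hfpos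
    have hfjR : (1 : ℝ) ≤ fvec j₀ := by exact_mod_cast hfvec j₀
    have h2 : (fvec j₀ : ℝ) / f * V ≤ (v j₀ : ℝ) + 3 := by linarith
    have h3 : (fvec j₀ : ℝ) * V ≤ ((v j₀ : ℝ) + 3) * f := by
      rw [div_mul_eq_mul_div, div_le_iff₀ hfR] at h2
      exact h2
    have h4 : (v j₀ : ℝ) < ((n₀ : ℝ) + 1) * fvec j₀ := by exact_mod_cast hvj₀
    have : (V : ℝ) < ((n₀ : ℝ) + 4) * f := by
      nlinarith [mul_pos (lt_of_lt_of_le one_pos hfjR) hfR]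
    exact_mod_cast this
  have hsum : ∑ j, P j = V - n₀ * f := by
    have : ∑ j, P j = ∑ j, (v j - n₀ * fvec j) := by
      exact Finset.sum_congr rfl fun j _ => hP j
    rw [this, hf, Finset.mul_sum, ← Finset.sum_tsub_distrib]
    intro i _; exact hle i
  have hle' : n₀ * f ≤ V := by
    rw [hf, Finset.mul_sum]
    exact Finset.sum_le_sum fun i _ => hle i
  rw [hsum, Nat.sub_lt_iff_lt_add hle']
  calc V < (n₀ + 4) * f := key
    _ = 4 * f + n₀ * f := by ring
end

section
/- Let v : V → ℕ^ℓ assign profiles to the nodes of a finite rooted binary tree T, with v(b) = 0 on Steiner nodes. For a node u with children y and z, and any q ∈ ℤ^ℓ, the set of feasible 'net import' splits {(q_y, q_z) : q_y + q_z = q} when u is Steiner, or {(q_y, q_z) : v(u) + q − q_y − q_z ∈ F} when u is non-Steiner, characterizes exactly the partial solutions at u obtained by combining partial solutions at y and z with the appropriate flow across edges (u,y) and (u,z). Consequently, the recurrence M[u,q] = min over feasible (q_y,q_z) of M[y,q_y] + M[z,q_z] + d(u,y)·‖q_y‖₁ + d(u,z)·‖q_z‖₁ computes the minimum-cost partial fair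 assignment value defined for subtree T_u. -/
open Finset

lemma exists_matching_aux {V : Type} [DecidableEq V] :
    ∀ (n : ℕ) (B : Finset V) (f g : V → ℕ), (∑ a ∈ B, f a) = n →
    ∃ m : V → V → ℕ,
      (∀ a, ∑ c ∈ B, m a c ≤ f a) ∧ (∀ c, ∑ a ∈ B, m a c ≤ g c) ∧
      (∑ a ∈ B, ∑ c ∈ B, m a c) = min (∑ a ∈ B, f a) (∑ c ∈ B, g c) := by
  intro n
  induction n with
  | zero =>
      intro B f g h
      exact ⟨fun _ _ => 0, by simp, by simp, by simp [h]⟩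
  | succ n ih =>
      intro B f g h
      by_cases hg : (∑ c ∈ B, g c) = 0
      · exact ⟨fun _ _ => 0, by simp, by simp, by simp [hg]⟩
      · have hf : (∑ a ∈ B, f a) ≠ 0 := by omega
        obtain ⟨a, ha, hfa⟩ := Finset.exists_ne_zero_of_sum_ne_zero hf
        obtain ⟨c, hc, hgc⟩ := Finset.exists_ne_zero_of_sum_ne_zero hg
        have hfe : f a + ∑ x ∈ B.erase a, f x = n + 1 := by
          rw [Finset.add_sum_erase _ _ ha]; exact h
        have hge : g c + ∑ x ∈ B.erase c, g x = ∑ x ∈ B, g x := by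
          rw [Finset.add_sum_erase _ _ hc]
        have hsumf : (∑ x ∈ B, Function.update f a (f a - 1) x) = n := by
          rw [Finset.sum_update_of_mem ha, Finset.sdiff_singleton_eq_erase]
          omega
        have hsumg : (∑ x ∈ B, Function.update g c (g c - 1) x) = (∑ x ∈ B, g x) - 1 := by
          rw [Finset.sum_update_of_mem hc, Finset.sdiff_singleton_eq_erase]
          omega
        obtain ⟨m, hrow, hcol, htot⟩ :=
          ih B (Function.update f a (f a - 1)) (Function.update g c (g c - 1)) hsumf
        refine ⟨fun x w => m x w + if x = a ∧ w = c then 1 else 0, ?_, ?_, ?_⟩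
        · intro x
          have hr := hrow x
          have hite : (∑ w ∈ B, (if x = a ∧ w = c then 1 else 0)) = if x = a then 1 else 0 := by
            by_cases hx : x = a
            · simp [hx, Finset.sum_ite_eq' B c (fun _ => 1), hc]
            · simp [hx]
          rw [Finset.sum_add_distrib, hite]
          by_cases hx : x = a
          · subst hx; rw [Function.update_self] at hr; simp; omega
          · rw [Function.update_of_ne hx] at hr; simp [hx]; omega
        · intro w
          have hr := hcol w
          have hite : (∑ x ∈ B, (if x = a ∧ w = c then 1 else 0)) = if w = c then 1 else 0 := by
            by_cases hw : w = c
            · simp [hw, Finset.sum_ite_eq' B a (fun _ => 1), ha]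
            · simp [hw]
          rw [Finset.sum_add_distrib, hite]
          by_cases hw : w = c
          · subst hw; rw [Function.update_self] at hr; simp; omega
          · rw [Function.update_of_ne hw] at hr; simp [hw]; omega
        · have hxy : (∑ x ∈ B, ∑ w ∈ B, (if x = a ∧ w = c then 1 else 0)) = 1 := by
            rw [Finset.sum_eq_single_of_mem a ha]
            · simp [Finset.sum_ite_eq' B c (fun _ => 1), hc]
            · intro b _ hb; simp [hb]
          have : (∑ x ∈ B, ∑ w ∈ B, (m x w + if x = a ∧ w = c then 1 else 0))
              = (∑ x ∈ B, ∑ w ∈ B, m x w) + 1 := by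
            simp only [Finset.sum_add_distrib]; omega
          rw [this, htot, hsumf, hsumg, h]
          omega

lemma le_sInf_add' {S : Set ENNReal} {L c : ENNReal} (h : ∀ a ∈ S, L ≤ a + c) :
    L ≤ sInf S + c := by
  rw [← tsub_le_iff_right]
  refine le_sInf fun a ha => ?_
  rw [tsub_le_iff_right]
  exact h a ha

noncomputable def Cost {V : Type} [DecidableEq V] (ℓ : ℕ) (d : V → V → NNReal)
    (B : Finset V) (w : V) (r : V → V → Fin ℓ → ℕ) (ρin ρout : V → Fin ℓ → ℕ) : ENNReal :=
  (∑ a ∈ B, ∑ c ∈ B, (d a c : ENNReal) * (∑ j, r a c j : ℕ))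
  + (∑ c ∈ B, (d c w : ENNReal) * (∑ j, ρin c j : ℕ))
  + (∑ a ∈ B, (d a w : ENNReal) * (∑ j, ρout a j : ℕ))

lemma cost_eq {V : Type} [DecidableEq V] (ℓ : ℕ) (d : V → V → NNReal)
    (B : Finset V) (w : V) (r : V → V → Fin ℓ → ℕ) (ρin ρout : V → Fin ℓ → ℕ) :
    Cost ℓ d B w r ρin ρout =
      ∑ j, ((∑ a ∈ B, ∑ c ∈ B, (d a c : ENNReal) * (r a c j : ℕ))
        + (∑ c ∈ B, (d c w : ENNReal) * (ρin c j : ℕ))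
        + (∑ a ∈ B, (d a w : ENNReal) * (ρout a j : ℕ))) := by
  unfold Cost
  have h1 : ∀ (f : V → Fin ℓ → ℕ),
      (∑ c ∈ B, (d c w : ENNReal) * (∑ j, f c j : ℕ))
        = ∑ j, ∑ c ∈ B, (d c w : ENNReal) * (f c j : ℕ) := by
    intro f
    push_cast
    simp only [Finset.mul_sum]
    exact Finset.sum_comm
  have h2 : (∑ a ∈ B, ∑ c ∈ B, (d a c : ENNReal) * (∑ j, r a c j : ℕ))
      = ∑ j, ∑ a ∈ B, ∑ c ∈ B, (d a c : ENNReal) * (r a c j : ℕ) := by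
    push_cast
    have : ∀ a ∈ B, (∑ c ∈ B, (d a c : ENNReal) * (∑ j, (r a c j : ENNReal)))
        = ∑ j, ∑ c ∈ B, (d a c : ENNReal) * (r a c j : ENNReal) := by
      intro a _
      simp only [Finset.mul_sum]
      exact Finset.sum_comm
    rw [Finset.sum_congr rfl this]
    exact Finset.sum_comm
  rw [h1, h1, h2, ← Finset.sum_add_distrib, ← Finset.sum_add_distrib]

/-- `DPval ℓ d A v F u q` is the minimum cost `M[u,q]` of a partial fair assignment on
the subtree rooted at `u` whose non-Steiner locations (and centers) are `A`:
the minimum over assignments `r`, exported profiles `ρout` and imported profiles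
`ρin` satisfying the conservation, fairness, and net-import constraints, of the
assignment cost plus the in/out transit cost to the root `u` (`⊤` if infeasible). -/
noncomputable def DPval {V : Type} [Fintype V] [DecidableEq V] (ℓ : ℕ)
    (d : V → V → NNReal) (A : Finset V) (v : V → Fin ℓ → ℕ)
    (F : Set (Fin ℓ → ℕ)) (u : V) (q : Fin ℓ → ℤ) : ENNReal :=
  sInf { x : ENNReal |
    ∃ (r : V → V → Fin ℓ → ℕ) (ρin ρout : V → Fin ℓ → ℕ),
      (∀ y ∈ A, ∀ j, (∑ c ∈ A, r y c j) + ρout y j = v y j) ∧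
      (∀ c ∈ A, (fun j => (∑ y ∈ A, r y c j) + ρin c j) ∈ F) ∧
      (∀ j, (∑ c ∈ A, (ρin c j : ℤ)) - (∑ y ∈ A, (ρout y j : ℤ)) = q j) ∧
      x = (∑ y ∈ A, ∑ c ∈ A, (d y c : ENNReal) * (∑ j, r y c j : ℕ))
          + (∑ c ∈ A, (d c u : ENNReal) * (∑ j, ρin c j : ℕ))
          + (∑ y ∈ A, (d y u : ENNReal) * (∑ j, ρout y j : ℕ)) }


lemma sum_split {V : Type} [DecidableEq V] {M : Type} [AddCommMonoid M]
    (A Ay Az : Finset V) (hy : Ay ⊆ A) (hz : Az ⊆ A) (hd : Disjoint Ay Az) (f : V → M) :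
    ∑ a ∈ A, f a = (∑ a ∈ Ay, f a) + (∑ a ∈ Az, f a) + (∑ a ∈ A \ (Ay ∪ Az), f a) := by
  rw [← Finset.sum_union hd, ← Finset.sum_union Finset.disjoint_sdiff,
    Finset.union_sdiff_of_subset (Finset.union_subset hy hz)]

lemma DPval_le {V : Type} [Fintype V] [DecidableEq V] (ℓ : ℕ)
    (d : V → V → NNReal) (A : Finset V) (v : V → Fin ℓ → ℕ)
    (F : Set (Fin ℓ → ℕ)) (u : V) (q : Fin ℓ → ℤ)
    (r : V → V → Fin ℓ → ℕ) (ρin ρout : V → Fin ℓ → ℕ)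
    (h1 : ∀ a ∈ A, ∀ j, (∑ c ∈ A, r a c j) + ρout a j = v a j)
    (h2 : ∀ c ∈ A, (fun j => (∑ a ∈ A, r a c j) + ρin c j) ∈ F)
    (h3 : ∀ j, (∑ c ∈ A, (ρin c j : ℤ)) - (∑ a ∈ A, (ρout a j : ℤ)) = q j) :
    DPval ℓ d A v F u q ≤ Cost ℓ d A u r ρin ρout := by
  unfold DPval
  exact sInf_le ⟨r, ρin, ρout, h1, h2, h3, rfl⟩


lemma normalizeSol {V : Type} [DecidableEq V] (ℓ : ℕ) (d : V → V → NNReal)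
    (hsymm : ∀ a b, d a b = d b a) (htri : ∀ a b c, d a c ≤ d a b + d b c)
    (B : Finset V) (w : V) (v : V → Fin ℓ → ℕ) (F : Set (Fin ℓ → ℕ)) (q : Fin ℓ → ℤ)
    (r : V → V → Fin ℓ → ℕ) (ρin ρout : V → Fin ℓ → ℕ)
    (h1 : ∀ a ∈ B, ∀ j, (∑ c ∈ B, r a c j) + ρout a j = v a j)
    (h2 : ∀ c ∈ B, (fun j => (∑ a ∈ B, r a c j) + ρin c j) ∈ F)
    (h3 : ∀ j, (∑ c ∈ B, (ρin c j : ℤ)) - (∑ a ∈ B, (ρout a j : ℤ)) = q j) :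
    ∃ (r' : V → V → Fin ℓ → ℕ) (ρin' ρout' : V → Fin ℓ → ℕ),
      (∀ a ∈ B, ∀ j, (∑ c ∈ B, r' a c j) + ρout' a j = v a j) ∧
      (∀ c ∈ B, (fun j => (∑ a ∈ B, r' a c j) + ρin' c j) ∈ F) ∧
      (∀ j, (∑ c ∈ B, (ρin' c j : ℤ)) - (∑ a ∈ B, (ρout' a j : ℤ)) = q j) ∧
      (∀ j, (∑ c ∈ B, ρin' c j) + (∑ a ∈ B, ρout' a j) = (q j).natAbs) ∧
      Cost ℓ d B w r' ρin' ρout' ≤ Cost ℓ d B w r ρin ρout := by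
  have hm : ∀ j : Fin ℓ, ∃ m : V → V → ℕ,
      (∀ a, ∑ c ∈ B, m a c ≤ ρout a j) ∧ (∀ c, ∑ a ∈ B, m a c ≤ ρin c j) ∧
      (∑ a ∈ B, ∑ c ∈ B, m a c) = min (∑ a ∈ B, ρout a j) (∑ c ∈ B, ρin c j) :=
    fun j => exists_matching_aux _ B _ _ rfl
  choose m hrow hcol htot using hm
  -- basic per-j sums
  have hsub_in : ∀ j, (∑ c ∈ B, (ρin c j - ∑ a ∈ B, m j a c))
      = (∑ c ∈ B, ρin c j) - (∑ a ∈ B, ∑ c ∈ B, m j a c) := by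
    intro j
    rw [Finset.sum_tsub_distrib B (fun c _ => hcol j c), Finset.sum_comm]
  have hsub_out : ∀ j, (∑ a ∈ B, (ρout a j - ∑ c ∈ B, m j a c))
      = (∑ a ∈ B, ρout a j) - (∑ a ∈ B, ∑ c ∈ B, m j a c) := by
    intro j
    rw [Finset.sum_tsub_distrib B (fun a _ => hrow j a)]
  have h3' : ∀ j, ((∑ c ∈ B, ρin c j : ℕ) : ℤ) - ((∑ a ∈ B, ρout a j : ℕ) : ℤ) = q j := by
    intro j; push_cast; exact h3 j
  refine ⟨fun a c j => r a c j + m j a c,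
          fun c j => ρin c j - ∑ a ∈ B, m j a c,
          fun a j => ρout a j - ∑ c ∈ B, m j a c, ?_, ?_, ?_, ?_, ?_⟩
  · intro a ha j
    show (∑ c ∈ B, (r a c j + m j a c)) + (ρout a j - ∑ c ∈ B, m j a c) = v a j
    have := h1 a ha j
    have hr := hrow j a
    rw [Finset.sum_add_distrib]
    omega
  · intro c hc
    have he : (fun j => (∑ a ∈ B, (r a c j + m j a c)) + (ρin c j - ∑ a ∈ B, m j a c))
        = (fun j => (∑ a ∈ B, r a c j) + ρin c j) := by
      funext j
      have := hcol j c
      rw [Finset.sum_add_distrib]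
      omega
    show (fun j => (∑ a ∈ B, (r a c j + m j a c)) + (ρin c j - ∑ a ∈ B, m j a c)) ∈ F
    rw [he]
    exact h2 c hc
  · intro j
    show (∑ c ∈ B, ((ρin c j - ∑ a ∈ B, m j a c : ℕ) : ℤ))
        - (∑ a ∈ B, ((ρout a j - ∑ c ∈ B, m j a c : ℕ) : ℤ)) = q j
    rw [← Nat.cast_sum, ← Nat.cast_sum, hsub_in j, hsub_out j]
    have e3 := htot j
    have e4 := h3' j
    omega
  · intro j
    have e1 := hsub_in j
    have e2 := hsub_out j
    have e3 := htot j
    have e4 := h3' j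
    rw [e1, e2]
    omega
  · rw [cost_eq, cost_eq]
    refine Finset.sum_le_sum fun j _ => ?_
    have hsplit1 : (∑ a ∈ B, ∑ c ∈ B, (d a c : ENNReal) * ((r a c j + m j a c : ℕ) : ENNReal))
        = (∑ a ∈ B, ∑ c ∈ B, (d a c : ENNReal) * (r a c j : ℕ))
          + (∑ a ∈ B, ∑ c ∈ B, (d a c : ENNReal) * (m j a c : ℕ)) := by
      push_cast
      simp only [mul_add, Finset.sum_add_distrib]
    have hmb : (∑ a ∈ B, ∑ c ∈ B, (d a c : ENNReal) * (m j a c : ℕ))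
        ≤ (∑ a ∈ B, ∑ c ∈ B, (d a w : ENNReal) * (m j a c : ℕ))
          + (∑ a ∈ B, ∑ c ∈ B, (d w c : ENNReal) * (m j a c : ℕ)) := by
      rw [← Finset.sum_add_distrib]
      refine Finset.sum_le_sum fun a _ => ?_
      rw [← Finset.sum_add_distrib]
      refine Finset.sum_le_sum fun c _ => ?_
      rw [← add_mul]
      refine mul_le_mul_of_nonneg_right ?_ (zero_le)
      have := htri a w c
      exact_mod_cast this
    have hout : (∑ a ∈ B, ∑ c ∈ B, (d a w : ENNReal) * (m j a c : ℕ))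
        + (∑ a ∈ B, (d a w : ENNReal) * ((ρout a j - ∑ c ∈ B, m j a c : ℕ) : ENNReal))
        = ∑ a ∈ B, (d a w : ENNReal) * (ρout a j : ℕ) := by
      rw [← Finset.sum_add_distrib]
      refine Finset.sum_congr rfl fun a _ => ?_
      rw [← Finset.mul_sum, ← mul_add]
      congr 1
      have := hrow j a
      norm_cast
      omega
    have hin : (∑ a ∈ B, ∑ c ∈ B, (d w c : ENNReal) * (m j a c : ℕ))
        + (∑ c ∈ B, (d c w : ENNReal) * ((ρin c j - ∑ a ∈ B, m j a c : ℕ) : ENNReal))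
        = ∑ c ∈ B, (d c w : ENNReal) * (ρin c j : ℕ) := by
      rw [Finset.sum_comm, ← Finset.sum_add_distrib]
      refine Finset.sum_congr rfl fun c _ => ?_
      rw [hsymm w c, ← Finset.mul_sum, ← mul_add]
      congr 1
      have := hcol j c
      norm_cast
      omega
    calc (∑ a ∈ B, ∑ c ∈ B, (d a c : ENNReal) * ((r a c j + m j a c : ℕ) : ENNReal))
          + (∑ c ∈ B, (d c w : ENNReal) * ((ρin c j - ∑ a ∈ B, m j a c : ℕ) : ENNReal))
          + (∑ a ∈ B, (d a w : ENNReal) * ((ρout a j - ∑ c ∈ B, m j a c : ℕ) : ENNReal))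
        ≤ ((∑ a ∈ B, ∑ c ∈ B, (d a c : ENNReal) * (r a c j : ℕ))
            + ((∑ a ∈ B, ∑ c ∈ B, (d a w : ENNReal) * (m j a c : ℕ))
              + (∑ a ∈ B, ∑ c ∈ B, (d w c : ENNReal) * (m j a c : ℕ))))
          + (∑ c ∈ B, (d c w : ENNReal) * ((ρin c j - ∑ a ∈ B, m j a c : ℕ) : ENNReal))
          + (∑ a ∈ B, (d a w : ENNReal) * ((ρout a j - ∑ c ∈ B, m j a c : ℕ) : ENNReal)) := by
          rw [hsplit1]
          exact add_le_add (add_le_add (add_le_add le_rfl hmb) le_rfl) le_rfl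
      _ = (∑ a ∈ B, ∑ c ∈ B, (d a c : ENNReal) * (r a c j : ℕ))
            + (∑ c ∈ B, (d c w : ENNReal) * (ρin c j : ℕ))
            + (∑ a ∈ B, (d a w : ENNReal) * (ρout a j : ℕ)) := by
          rw [← hout, ← hin]
          ring

lemma combine {V : Type} [Fintype V] [DecidableEq V] (ℓ : ℕ)
    (d : V → V → NNReal) (v : V → Fin ℓ → ℕ) (F : Set (Fin ℓ → ℕ))
    (u y z : V) (Vy Vz : Finset V) (A : Finset V)
    (hy : y ∈ Vy) (hz : z ∈ Vz) (hdisj : Disjoint Vy Vz)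
    (huy : u ∉ Vy) (huz : u ∉ Vz)
    (hA : A ⊆ insert u (Vy ∪ Vz))
    (hsymm : ∀ a b, d a b = d b a) (hself : ∀ a, d a a = 0)
    (hty : ∀ a ∈ Vy, d a u = d a y + d y u)
    (htz : ∀ b ∈ Vz, d b u = d b z + d z u)
    (q qy qz : Fin ℓ → ℤ)
    (hFu : u ∈ A → ∃ p ∈ F, ∀ j, (p j : ℤ) = (v u j : ℤ) + q j - qy j - qz j)
    (hqu : u ∉ A → ∀ j, q j = qy j + qz j)
    (ry : V → V → Fin ℓ → ℕ) (ιy oy : V → Fin ℓ → ℕ)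
    (hy1 : ∀ a ∈ A ∩ Vy, ∀ j, (∑ c ∈ A ∩ Vy, ry a c j) + oy a j = v a j)
    (hy2 : ∀ c ∈ A ∩ Vy, (fun j => (∑ a ∈ A ∩ Vy, ry a c j) + ιy c j) ∈ F)
    (hy3 : ∀ j, (∑ c ∈ A ∩ Vy, (ιy c j : ℤ)) - (∑ a ∈ A ∩ Vy, (oy a j : ℤ)) = qy j)
    (hy4 : ∀ j, (∑ c ∈ A ∩ Vy, ιy c j) + (∑ a ∈ A ∩ Vy, oy a j) = (qy j).natAbs)
    (rz : V → V → Fin ℓ → ℕ) (ιz oz : V → Fin ℓ → ℕ)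
    (hz1 : ∀ a ∈ A ∩ Vz, ∀ j, (∑ c ∈ A ∩ Vz, rz a c j) + oz a j = v a j)
    (hz2 : ∀ c ∈ A ∩ Vz, (fun j => (∑ a ∈ A ∩ Vz, rz a c j) + ιz c j) ∈ F)
    (hz3 : ∀ j, (∑ c ∈ A ∩ Vz, (ιz c j : ℤ)) - (∑ a ∈ A ∩ Vz, (oz a j : ℤ)) = qz j)
    (hz4 : ∀ j, (∑ c ∈ A ∩ Vz, ιz c j) + (∑ a ∈ A ∩ Vz, oz a j) = (qz j).natAbs) :
    DPval ℓ d A v F u q ≤ Cost ℓ d (A ∩ Vy) y ry ιy oy + Cost ℓ d (A ∩ Vz) z rz ιz oz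
      + (d u y : ENNReal) * (∑ j, (qy j).natAbs : ℕ)
      + (d u z : ENNReal) * (∑ j, (qz j).natAbs : ℕ) := by
  classical
  set Ay := A ∩ Vy with hAydef
  set Az := A ∩ Vz with hAzdef
  have hAyA : Ay ⊆ A := Finset.inter_subset_left
  have hAzA : Az ⊆ A := Finset.inter_subset_left
  have hdAB : Disjoint Ay Az :=
    hdisj.mono Finset.inter_subset_right Finset.inter_subset_right
  have huAy : u ∉ Ay := fun h => huy (Finset.mem_inter.mp h).2
  have huAz : u ∉ Az := fun h => huz (Finset.mem_inter.mp h).2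
  have hcase : ∀ a ∈ A, a ∉ Ay → a ∉ Az → a = u := by
    intro a ha h1 h2
    rcases Finset.mem_insert.mp (hA ha) with h | h
    · exact h
    · rcases Finset.mem_union.mp h with h | h
      · exact absurd (Finset.mem_inter.mpr ⟨ha, h⟩) h1
      · exact absurd (Finset.mem_inter.mpr ⟨ha, h⟩) h2
  have hAu : A \ (Ay ∪ Az) = if u ∈ A then {u} else ∅ := by
    ext a
    constructor
    · intro hmem
      rw [Finset.mem_sdiff] at hmem
      obtain ⟨ha, hno⟩ := hmem
      have h1 : a ∉ Ay := fun h => hno (Finset.mem_union_left _ h)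
      have h2 : a ∉ Az := fun h => hno (Finset.mem_union_right _ h)
      have := hcase a ha h1 h2
      subst this
      rw [if_pos ha]
      exact Finset.mem_singleton_self a
    · intro hmem
      by_cases hu : u ∈ A
      · rw [if_pos hu, Finset.mem_singleton] at hmem
        subst hmem
        exact Finset.mem_sdiff.mpr ⟨hu, fun h => (Finset.mem_union.mp h).elim huAy huAz⟩
      · rw [if_neg hu] at hmem
        exact absurd hmem (Finset.notMem_empty a)
  obtain ⟨pp, ppF, ppEq⟩ : ∃ pp : Fin ℓ → ℕ, (u ∈ A → pp ∈ F) ∧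
      (u ∈ A → ∀ j, (pp j : ℤ) = (v u j : ℤ) + q j - qy j - qz j) := by
    by_cases hu : u ∈ A
    · obtain ⟨p, hp1, hp2⟩ := hFu hu
      exact ⟨p, fun _ => hp1, fun _ => hp2⟩
    · exact ⟨0, fun h => absurd h hu, fun h => absurd h hu⟩
  set r' : V → V → Fin ℓ → ℕ := fun a c j =>
    if a ∈ Ay ∧ c ∈ Ay then ry a c j else if a ∈ Az ∧ c ∈ Az then rz a c j else 0 with hr'
  set ι' : V → Fin ℓ → ℕ := fun c j =>
    if c ∈ Ay then ιy c j else if c ∈ Az then ιz c j else pp j with hι'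
  set o' : V → Fin ℓ → ℕ := fun a j =>
    if a ∈ Ay then oy a j else if a ∈ Az then oz a j else v a j with ho'
  have hrow_y : ∀ a ∈ Ay, ∀ j, (∑ c ∈ A, r' a c j) = ∑ c ∈ Ay, ry a c j := by
    intro a ha j
    have hnaz : a ∉ Az := Finset.disjoint_left.mp hdAB ha
    rw [show (∑ c ∈ A, r' a c j) = ∑ c ∈ A, (if c ∈ Ay then ry a c j else 0) from
      Finset.sum_congr rfl fun c _ => by simp [hr', ha, hnaz]]
    rw [Finset.sum_ite_mem, Finset.inter_eq_right.mpr hAyA]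
  have hrow_z : ∀ a ∈ Az, ∀ j, (∑ c ∈ A, r' a c j) = ∑ c ∈ Az, rz a c j := by
    intro a ha j
    have hnay : a ∉ Ay := Finset.disjoint_right.mp hdAB ha
    rw [show (∑ c ∈ A, r' a c j) = ∑ c ∈ A, (if c ∈ Az then rz a c j else 0) from
      Finset.sum_congr rfl fun c _ => by simp [hr', ha, hnay]]
    rw [Finset.sum_ite_mem, Finset.inter_eq_right.mpr hAzA]
  have hrow_u : ∀ a, a ∉ Ay → a ∉ Az → ∀ j, (∑ c ∈ A, r' a c j) = 0 := by
    intro a h1 h2 j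
    refine Finset.sum_eq_zero fun c _ => by simp [hr', h1, h2]
  have hcol_y : ∀ c ∈ Ay, ∀ j, (∑ a ∈ A, r' a c j) = ∑ a ∈ Ay, ry a c j := by
    intro c hc j
    have hncz : c ∉ Az := Finset.disjoint_left.mp hdAB hc
    rw [show (∑ a ∈ A, r' a c j) = ∑ a ∈ A, (if a ∈ Ay then ry a c j else 0) from
      Finset.sum_congr rfl fun a _ => by simp [hr', hc, hncz]]
    rw [Finset.sum_ite_mem, Finset.inter_eq_right.mpr hAyA]
  have hcol_z : ∀ c ∈ Az, ∀ j, (∑ a ∈ A, r' a c j) = ∑ a ∈ Az, rz a c j := by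
    intro c hc j
    have hncy : c ∉ Ay := Finset.disjoint_right.mp hdAB hc
    rw [show (∑ a ∈ A, r' a c j) = ∑ a ∈ A, (if a ∈ Az then rz a c j else 0) from
      Finset.sum_congr rfl fun a _ => by simp [hr', hc, hncy]]
    rw [Finset.sum_ite_mem, Finset.inter_eq_right.mpr hAzA]
  have hcol_u : ∀ c, c ∉ Ay → c ∉ Az → ∀ j, (∑ a ∈ A, r' a c j) = 0 := by
    intro c h1 h2 j
    refine Finset.sum_eq_zero fun a _ => by simp [hr', h1, h2]
  have cons : ∀ a ∈ A, ∀ j, (∑ c ∈ A, r' a c j) + o' a j = v a j := by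
    intro a ha j
    by_cases h1 : a ∈ Ay
    · rw [hrow_y a h1 j]
      have := hy1 a h1 j
      simp only [hι', ho', h1, if_pos]
      exact this
    · by_cases h2 : a ∈ Az
      · rw [hrow_z a h2 j]
        have := hz1 a h2 j
        simp only [ho', h1, h2, if_neg, if_pos, ite_true, ite_false]
        exact this
      · have hau := hcase a ha h1 h2
        rw [hrow_u a h1 h2 j]
        simp [ho', h1, h2]
  have fair : ∀ c ∈ A, (fun j => (∑ a ∈ A, r' a c j) + ι' c j) ∈ F := by
    intro c hc
    by_cases h1 : c ∈ Ay
    · have he : (fun j => (∑ a ∈ A, r' a c j) + ι' c j)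
          = (fun j => (∑ a ∈ Ay, ry a c j) + ιy c j) := by
        funext j
        rw [hcol_y c h1 j]
        simp [hι', h1]
      rw [he]
      exact hy2 c h1
    · by_cases h2 : c ∈ Az
      · have he : (fun j => (∑ a ∈ A, r' a c j) + ι' c j)
            = (fun j => (∑ a ∈ Az, rz a c j) + ιz c j) := by
          funext j
          rw [hcol_z c h2 j]
          simp [hι', h1, h2]
        rw [he]
        exact hz2 c h2
      · have hcu := hcase c hc h1 h2
        subst hcu
        have he : (fun j => (∑ a ∈ A, r' a c j) + ι' c j) = pp := by
          funext j
          rw [hcol_u c h1 h2 j]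
          simp [hι', h1, h2]
        rw [he]
        exact ppF hc
  have net : ∀ j, (∑ c ∈ A, (ι' c j : ℤ)) - (∑ a ∈ A, (o' a j : ℤ)) = q j := by
    intro j
    rw [sum_split A Ay Az hAyA hAzA hdAB (fun c => (ι' c j : ℤ)),
      sum_split A Ay Az hAyA hAzA hdAB (fun a => (o' a j : ℤ))]
    have e1 : ∑ c ∈ Ay, (ι' c j : ℤ) = ∑ c ∈ Ay, (ιy c j : ℤ) :=
      Finset.sum_congr rfl fun c hc => by simp [hι', hc]
    have e2 : ∑ c ∈ Az, (ι' c j : ℤ) = ∑ c ∈ Az, (ιz c j : ℤ) :=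
      Finset.sum_congr rfl fun c hc => by
        have : c ∉ Ay := Finset.disjoint_right.mp hdAB hc
        simp [hι', this, hc]
    have e3 : ∑ a ∈ Ay, (o' a j : ℤ) = ∑ a ∈ Ay, (oy a j : ℤ) :=
      Finset.sum_congr rfl fun a ha => by simp [ho', ha]
    have e4 : ∑ a ∈ Az, (o' a j : ℤ) = ∑ a ∈ Az, (oz a j : ℤ) :=
      Finset.sum_congr rfl fun a ha => by
        have : a ∉ Ay := Finset.disjoint_right.mp hdAB ha
        simp [ho', this, ha]
    rw [e1, e2, e3, e4, hAu]
    have h3y := hy3 j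
    have h3z := hz3 j
    by_cases hu : u ∈ A
    · rw [if_pos hu]
      have hpe := ppEq hu j
      simp only [Finset.sum_singleton]
      have hιu : (ι' u j : ℤ) = (pp j : ℤ) := by simp [hι', huAy, huAz]
      have hou : (o' u j : ℤ) = (v u j : ℤ) := by simp [ho', huAy, huAz]
      rw [hιu, hou]
      omega
    · rw [if_neg hu]
      simp only [Finset.sum_empty]
      have := hqu hu j
      omega
  refine le_trans (DPval_le ℓ d A v F u q r' ι' o' cons fair net) (le_of_eq ?_)
  rw [cost_eq ℓ d A u, cost_eq ℓ d Ay y, cost_eq ℓ d Az z]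
  have htransy : (d u y : ENNReal) * ((∑ j, (qy j).natAbs : ℕ) : ENNReal)
      = ∑ j, ((∑ c ∈ Ay, (d y u : ENNReal) * (ιy c j : ℕ))
          + (∑ a ∈ Ay, (d y u : ENNReal) * (oy a j : ℕ))) := by
    push_cast
    rw [Finset.mul_sum]
    refine Finset.sum_congr rfl fun j _ => ?_
    have h4 := hy4 j
    rw [← Finset.mul_sum, ← Finset.mul_sum, ← mul_add, hsymm u y]
    congr 1
    norm_cast
    omega
  have htransz : (d u z : ENNReal) * ((∑ j, (qz j).natAbs : ℕ) : ENNReal)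
      = ∑ j, ((∑ c ∈ Az, (d z u : ENNReal) * (ιz c j : ℕ))
          + (∑ a ∈ Az, (d z u : ENNReal) * (oz a j : ℕ))) := by
    push_cast
    rw [Finset.mul_sum]
    refine Finset.sum_congr rfl fun j _ => ?_
    have h4 := hz4 j
    rw [← Finset.mul_sum, ← Finset.mul_sum, ← mul_add, hsymm u z]
    congr 1
    norm_cast
    omega
  rw [htransy, htransz, ← Finset.sum_add_distrib, ← Finset.sum_add_distrib,
    ← Finset.sum_add_distrib]
  refine Finset.sum_congr rfl fun j _ => ?_
  have eT1 : (∑ a ∈ A, ∑ c ∈ A, (d a c : ENNReal) * (r' a c j : ℕ))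
      = (∑ a ∈ Ay, ∑ c ∈ Ay, (d a c : ENNReal) * (ry a c j : ℕ))
        + (∑ a ∈ Az, ∑ c ∈ Az, (d a c : ENNReal) * (rz a c j : ℕ)) := by
    rw [sum_split A Ay Az hAyA hAzA hdAB (fun a => ∑ c ∈ A, (d a c : ENNReal) * (r' a c j : ℕ))]
    have z3 : ∑ a ∈ A \ (Ay ∪ Az), (∑ c ∈ A, (d a c : ENNReal) * (r' a c j : ℕ)) = 0 := by
      refine Finset.sum_eq_zero fun a ha => ?_
      rw [Finset.mem_sdiff] at ha
      have h1 : a ∉ Ay := fun h => ha.2 (Finset.mem_union_left _ h)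
      have h2 : a ∉ Az := fun h => ha.2 (Finset.mem_union_right _ h)
      exact Finset.sum_eq_zero fun c _ => by simp [hr', h1, h2]
    rw [z3, add_zero]
    congr 1
    · refine Finset.sum_congr rfl fun a ha => ?_
      have hnaz : a ∉ Az := Finset.disjoint_left.mp hdAB ha
      rw [show (∑ c ∈ A, (d a c : ENNReal) * (r' a c j : ℕ))
          = ∑ c ∈ A, (if c ∈ Ay then (d a c : ENNReal) * (ry a c j : ℕ) else 0) from
        Finset.sum_congr rfl fun c _ => by by_cases hcy : c ∈ Ay <;> simp [hr', ha, hnaz, hcy]]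
      rw [Finset.sum_ite_mem, Finset.inter_eq_right.mpr hAyA]
    · refine Finset.sum_congr rfl fun a ha => ?_
      have hnay : a ∉ Ay := Finset.disjoint_right.mp hdAB ha
      rw [show (∑ c ∈ A, (d a c : ENNReal) * (r' a c j : ℕ))
          = ∑ c ∈ A, (if c ∈ Az then (d a c : ENNReal) * (rz a c j : ℕ) else 0) from
        Finset.sum_congr rfl fun c _ => by by_cases hcz : c ∈ Az <;> simp [hr', ha, hnay, hcz]]
      rw [Finset.sum_ite_mem, Finset.inter_eq_right.mpr hAzA]
  have eT2 : (∑ c ∈ A, (d c u : ENNReal) * (ι' c j : ℕ))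
      = ((∑ c ∈ Ay, (d c y : ENNReal) * (ιy c j : ℕ))
          + (∑ c ∈ Ay, (d y u : ENNReal) * (ιy c j : ℕ)))
        + ((∑ c ∈ Az, (d c z : ENNReal) * (ιz c j : ℕ))
          + (∑ c ∈ Az, (d z u : ENNReal) * (ιz c j : ℕ))) := by
    rw [sum_split A Ay Az hAyA hAzA hdAB (fun c => (d c u : ENNReal) * (ι' c j : ℕ))]
    have z3 : ∑ c ∈ A \ (Ay ∪ Az), (d c u : ENNReal) * (ι' c j : ℕ) = 0 := by
      rw [hAu]
      split_ifs with hu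
      · simp [hself]
      · simp
    rw [z3, add_zero]
    congr 1
    · rw [← Finset.sum_add_distrib]
      refine Finset.sum_congr rfl fun c hc => ?_
      have hcVy : c ∈ Vy := (Finset.mem_inter.mp hc).2
      have hιc : ι' c j = ιy c j := by simp [hι', hc]
      rw [hιc, hty c hcVy]
      push_cast
      ring
    · rw [← Finset.sum_add_distrib]
      refine Finset.sum_congr rfl fun c hc => ?_
      have hncy : c ∉ Ay := Finset.disjoint_right.mp hdAB hc
      have hcVz : c ∈ Vz := (Finset.mem_inter.mp hc).2
      have hιc : ι' c j = ιz c j := by simp [hι', hncy, hc]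
      rw [hιc, htz c hcVz]
      push_cast
      ring
  have eT3 : (∑ a ∈ A, (d a u : ENNReal) * (o' a j : ℕ))
      = ((∑ a ∈ Ay, (d a y : ENNReal) * (oy a j : ℕ))
          + (∑ a ∈ Ay, (d y u : ENNReal) * (oy a j : ℕ)))
        + ((∑ a ∈ Az, (d a z : ENNReal) * (oz a j : ℕ))
          + (∑ a ∈ Az, (d z u : ENNReal) * (oz a j : ℕ))) := by
    rw [sum_split A Ay Az hAyA hAzA hdAB (fun a => (d a u : ENNReal) * (o' a j : ℕ))]
    have z3 : ∑ a ∈ A \ (Ay ∪ Az), (d a u : ENNReal) * (o' a j : ℕ) = 0 := by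
      rw [hAu]
      split_ifs with hu
      · simp [hself]
      · simp
    rw [z3, add_zero]
    congr 1
    · rw [← Finset.sum_add_distrib]
      refine Finset.sum_congr rfl fun a ha => ?_
      have haVy : a ∈ Vy := (Finset.mem_inter.mp ha).2
      have hoc : o' a j = oy a j := by simp [ho', ha]
      rw [hoc, hty a haVy]
      push_cast
      ring
    · rw [← Finset.sum_add_distrib]
      refine Finset.sum_congr rfl fun a ha => ?_
      have hnay : a ∉ Ay := Finset.disjoint_right.mp hdAB ha
      have haVz : a ∈ Vz := (Finset.mem_inter.mp ha).2
      have hoc : o' a j = oz a j := by simp [ho', hnay, ha]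
      rw [hoc, htz a haVz]
      push_cast
      ring
  rw [eT1, eT2, eT3]
  ring

lemma le_DPval_add {V : Type} [Fintype V] [DecidableEq V] {ℓ : ℕ}
    {d : V → V → NNReal} {A : Finset V} {v : V → Fin ℓ → ℕ}
    {F : Set (Fin ℓ → ℕ)} {w : V} {qw : Fin ℓ → ℤ} (L c : ENNReal)
    (h : ∀ (r : V → V → Fin ℓ → ℕ) (ρin ρout : V → Fin ℓ → ℕ),
      (∀ a ∈ A, ∀ j, (∑ c ∈ A, r a c j) + ρout a j = v a j) →
      (∀ cc ∈ A, (fun j => (∑ a ∈ A, r a cc j) + ρin cc j) ∈ F) →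
      (∀ j, (∑ cc ∈ A, (ρin cc j : ℤ)) - (∑ a ∈ A, (ρout a j : ℤ)) = qw j) →
      L ≤ Cost ℓ d A w r ρin ρout + c) :
    L ≤ DPval ℓ d A v F w qw + c := by
  unfold DPval
  refine le_sInf_add' ?_
  rintro xa ⟨r, i, o, h1, h2, h3, rfl⟩
  exact h r i o h1 h2 h3

lemma dir1 {V : Type} [Fintype V] [DecidableEq V] (ℓ : ℕ)
    (d : V → V → NNReal) (v : V → Fin ℓ → ℕ) (F : Set (Fin ℓ → ℕ))
    (u y z : V) (Vy Vz : Finset V) (A : Finset V)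
    (hy : y ∈ Vy) (hz : z ∈ Vz) (hdisj : Disjoint Vy Vz)
    (huy : u ∉ Vy) (huz : u ∉ Vz)
    (hA : A ⊆ insert u (Vy ∪ Vz))
    (hsymm : ∀ a b, d a b = d b a) (hself : ∀ a, d a a = 0)
    (htri : ∀ a b c, d a c ≤ d a b + d b c)
    (hty : ∀ a ∈ Vy, d a u = d a y + d y u)
    (htz : ∀ b ∈ Vz, d b u = d b z + d z u)
    (q qy qz : Fin ℓ → ℤ)
    (hFu : u ∈ A → ∃ p ∈ F, ∀ j, (p j : ℤ) = (v u j : ℤ) + q j - qy j - qz j)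
    (hqu : u ∉ A → ∀ j, q j = qy j + qz j) :
    DPval ℓ d A v F u q ≤ DPval ℓ d (A ∩ Vy) v F y qy + DPval ℓ d (A ∩ Vz) v F z qz
      + (d u y : ENNReal) * (∑ j, (qy j).natAbs : ℕ)
      + (d u z : ENNReal) * (∑ j, (qz j).natAbs : ℕ) := by
  set L := DPval ℓ d A v F u q with hL
  set ty : ENNReal := (d u y : ENNReal) * (∑ j, (qy j).natAbs : ℕ) with hty0
  set tz : ENNReal := (d u z : ENNReal) * (∑ j, (qz j).natAbs : ℕ) with htz0
  have main : ∀ (ry : V → V → Fin ℓ → ℕ) (ιy oy : V → Fin ℓ → ℕ),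
      (∀ a ∈ A ∩ Vy, ∀ j, (∑ c ∈ A ∩ Vy, ry a c j) + oy a j = v a j) →
      (∀ c ∈ A ∩ Vy, (fun j => (∑ a ∈ A ∩ Vy, ry a c j) + ιy c j) ∈ F) →
      (∀ j, (∑ c ∈ A ∩ Vy, (ιy c j : ℤ)) - (∑ a ∈ A ∩ Vy, (oy a j : ℤ)) = qy j) →
      ∀ (rz : V → V → Fin ℓ → ℕ) (ιz oz : V → Fin ℓ → ℕ),
      (∀ a ∈ A ∩ Vz, ∀ j, (∑ c ∈ A ∩ Vz, rz a c j) + oz a j = v a j) →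
      (∀ c ∈ A ∩ Vz, (fun j => (∑ a ∈ A ∩ Vz, rz a c j) + ιz c j) ∈ F) →
      (∀ j, (∑ c ∈ A ∩ Vz, (ιz c j : ℤ)) - (∑ a ∈ A ∩ Vz, (oz a j : ℤ)) = qz j) →
      L ≤ Cost ℓ d (A ∩ Vy) y ry ιy oy + Cost ℓ d (A ∩ Vz) z rz ιz oz + ty + tz := by
    intro ry ιy oy hy1 hy2 hy3 rz ιz oz hz1 hz2 hz3
    obtain ⟨ry', ιy', oy', ky1, ky2, ky3, ky4, ky5⟩ :=
      normalizeSol ℓ d hsymm htri (A ∩ Vy) y v F qy ry ιy oy hy1 hy2 hy3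
    obtain ⟨rz', ιz', oz', kz1, kz2, kz3, kz4, kz5⟩ :=
      normalizeSol ℓ d hsymm htri (A ∩ Vz) z v F qz rz ιz oz hz1 hz2 hz3
    calc L ≤ Cost ℓ d (A ∩ Vy) y ry' ιy' oy' + Cost ℓ d (A ∩ Vz) z rz' ιz' oz' + ty + tz :=
          combine ℓ d v F u y z Vy Vz A hy hz hdisj huy huz hA hsymm hself hty htz
            q qy qz hFu hqu ry' ιy' oy' ky1 ky2 ky3 ky4 rz' ιz' oz' kz1 kz2 kz3 kz4
      _ ≤ Cost ℓ d (A ∩ Vy) y ry ιy oy + Cost ℓ d (A ∩ Vz) z rz ιz oz + ty + tz := by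
          exact add_le_add (add_le_add (add_le_add ky5 kz5) le_rfl) le_rfl
  have step : L ≤ DPval ℓ d (A ∩ Vy) v F y qy + (DPval ℓ d (A ∩ Vz) v F z qz + (ty + tz)) := by
    refine le_DPval_add L _ fun ry ιy oy h1 h2 h3 => ?_
    have inner : L ≤ DPval ℓ d (A ∩ Vz) v F z qz + (Cost ℓ d (A ∩ Vy) y ry ιy oy + (ty + tz)) := by
      refine le_DPval_add L _ fun rz ιz oz g1 g2 g3 => ?_
      calc L ≤ Cost ℓ d (A ∩ Vy) y ry ιy oy + Cost ℓ d (A ∩ Vz) z rz ιz oz + ty + tz :=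
            main ry ιy oy h1 h2 h3 rz ιz oz g1 g2 g3
        _ = Cost ℓ d (A ∩ Vz) z rz ιz oz + (Cost ℓ d (A ∩ Vy) y ry ιy oy + (ty + tz)) := by ring
    calc L ≤ DPval ℓ d (A ∩ Vz) v F z qz + (Cost ℓ d (A ∩ Vy) y ry ιy oy + (ty + tz)) := inner
      _ = Cost ℓ d (A ∩ Vy) y ry ιy oy + (DPval ℓ d (A ∩ Vz) v F z qz + (ty + tz)) := by ring
  calc L ≤ DPval ℓ d (A ∩ Vy) v F y qy + (DPval ℓ d (A ∩ Vz) v F z qz + (ty + tz)) := step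
    _ = DPval ℓ d (A ∩ Vy) v F y qy + DPval ℓ d (A ∩ Vz) v F z qz + ty + tz := by ring

lemma dir2 {V : Type} [Fintype V] [DecidableEq V] (ℓ : ℕ)
    (d : V → V → NNReal) (v : V → Fin ℓ → ℕ) (F : Set (Fin ℓ → ℕ))
    (u y z : V) (Vy Vz : Finset V) (A : Finset V)
    (hy : y ∈ Vy) (hz : z ∈ Vz) (hdisj : Disjoint Vy Vz)
    (huy : u ∉ Vy) (huz : u ∉ Vz)
    (hA : A ⊆ insert u (Vy ∪ Vz))
    (hsymm : ∀ a b, d a b = d b a) (hself : ∀ a, d a a = 0)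
    (hty : ∀ a ∈ Vy, d a u = d a y + d y u)
    (htz : ∀ b ∈ Vz, d b u = d b z + d z u)
    (htyz : ∀ a ∈ Vy, ∀ b ∈ Vz, d a b = d a u + d u b)
    (q : Fin ℓ → ℤ) :
    sInf { x : ENNReal | ∃ qy qz : Fin ℓ → ℤ,
        (u ∈ A → ∃ p ∈ F, ∀ j, (p j : ℤ) = (v u j : ℤ) + q j - qy j - qz j) ∧
        (u ∉ A → ∀ j, q j = qy j + qz j) ∧
        x = DPval ℓ d (A ∩ Vy) v F y qy + DPval ℓ d (A ∩ Vz) v F z qz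
            + (d u y : ENNReal) * (∑ j, (qy j).natAbs : ℕ)
            + (d u z : ENNReal) * (∑ j, (qz j).natAbs : ℕ) }
      ≤ DPval ℓ d A v F u q := by
  classical
  refine le_sInf ?_
  rintro x ⟨r, i, o, h1, h2, h3, rfl⟩
  set Ay := A ∩ Vy with hAydef
  set Az := A ∩ Vz with hAzdef
  have hAyA : Ay ⊆ A := Finset.inter_subset_left
  have hAzA : Az ⊆ A := Finset.inter_subset_left
  have hdAB : Disjoint Ay Az :=
    hdisj.mono Finset.inter_subset_right Finset.inter_subset_right
  have huAy : u ∉ Ay := fun h => huy (Finset.mem_inter.mp h).2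
  have huAz : u ∉ Az := fun h => huz (Finset.mem_inter.mp h).2
  have hcase : ∀ a ∈ A, a ∉ Ay → a ∉ Az → a = u := by
    intro a ha h1' h2'
    rcases Finset.mem_insert.mp (hA ha) with h | h
    · exact h
    · rcases Finset.mem_union.mp h with h | h
      · exact absurd (Finset.mem_inter.mpr ⟨ha, h⟩) h1'
      · exact absurd (Finset.mem_inter.mpr ⟨ha, h⟩) h2'
  set Au := A \ (Ay ∪ Az) with hAudef
  have hmemAu : ∀ a ∈ Au, a = u := by
    intro a ha
    rw [hAudef, Finset.mem_sdiff] at ha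
    exact hcase a ha.1 (fun h => ha.2 (Finset.mem_union_left _ h))
      (fun h => ha.2 (Finset.mem_union_right _ h))
  have hAyComp : A \ Ay = Az ∪ Au := by
    ext a
    simp only [Finset.mem_sdiff, Finset.mem_union, hAudef]
    constructor
    · rintro ⟨ha, hnay⟩
      by_cases haz : a ∈ Az
      · exact Or.inl haz
      · exact Or.inr ⟨ha, fun h => h.elim hnay haz⟩
    · rintro (haz | ⟨ha, hno⟩)
      · exact ⟨hAzA haz, Finset.disjoint_right.mp hdAB haz⟩
      · exact ⟨ha, fun h => hno (Or.inl h)⟩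
  have hAzComp : A \ Az = Ay ∪ Au := by
    ext a
    simp only [Finset.mem_sdiff, Finset.mem_union, hAudef]
    constructor
    · rintro ⟨ha, hnaz⟩
      by_cases hay : a ∈ Ay
      · exact Or.inl hay
      · exact Or.inr ⟨ha, fun h => h.elim hay hnaz⟩
    · rintro (hay | ⟨ha, hno⟩)
      · exact ⟨hAyA hay, Finset.disjoint_left.mp hdAB hay⟩
      · exact ⟨ha, fun h => hno (Or.inr h)⟩
  have hdisjZU : Disjoint Az Au := by
    rw [hAudef]
    exact Finset.disjoint_sdiff.mono_left (Finset.subset_union_right)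
  have hdisjYU : Disjoint Ay Au := by
    rw [hAudef]
    exact Finset.disjoint_sdiff.mono_left (Finset.subset_union_left)
  -- the child solutions
  set ιy : V → Fin ℓ → ℕ := fun c j => i c j + ∑ a ∈ A \ Ay, r a c j with hιy
  set oy : V → Fin ℓ → ℕ := fun a j => o a j + ∑ c ∈ A \ Ay, r a c j with hoy
  set ιz : V → Fin ℓ → ℕ := fun c j => i c j + ∑ a ∈ A \ Az, r a c j with hιz
  set oz : V → Fin ℓ → ℕ := fun a j => o a j + ∑ c ∈ A \ Az, r a c j with hoz
  set qy : Fin ℓ → ℤ := fun j => (∑ c ∈ Ay, (ιy c j : ℤ)) - (∑ a ∈ Ay, (oy a j : ℤ)) with hqy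
  set qz : Fin ℓ → ℤ := fun j => (∑ c ∈ Az, (ιz c j : ℤ)) - (∑ a ∈ Az, (oz a j : ℤ)) with hqz
  have cy1 : ∀ a ∈ Ay, ∀ j, (∑ c ∈ Ay, r a c j) + oy a j = v a j := by
    intro a ha j
    have hs : (∑ c ∈ A \ Ay, r a c j) + (∑ c ∈ Ay, r a c j) = ∑ c ∈ A, r a c j :=
      Finset.sum_sdiff hAyA
    have := h1 a (hAyA ha) j
    simp only [hoy]
    omega
  have cy2 : ∀ c ∈ Ay, (fun j => (∑ a ∈ Ay, r a c j) + ιy c j) ∈ F := by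
    intro c hc
    have he : (fun j => (∑ a ∈ Ay, r a c j) + ιy c j)
        = (fun j => (∑ a ∈ A, r a c j) + i c j) := by
      funext j
      have hs : (∑ a ∈ A \ Ay, r a c j) + (∑ a ∈ Ay, r a c j) = ∑ a ∈ A, r a c j :=
        Finset.sum_sdiff hAyA
      simp only [hιy]
      omega
    rw [he]
    exact h2 c (hAyA hc)
  have cy3 : ∀ j, (∑ c ∈ Ay, (ιy c j : ℤ)) - (∑ a ∈ Ay, (oy a j : ℤ)) = qy j := fun j => rfl
  have cz1 : ∀ a ∈ Az, ∀ j, (∑ c ∈ Az, r a c j) + oz a j = v a j := by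
    intro a ha j
    have hs : (∑ c ∈ A \ Az, r a c j) + (∑ c ∈ Az, r a c j) = ∑ c ∈ A, r a c j :=
      Finset.sum_sdiff hAzA
    have := h1 a (hAzA ha) j
    simp only [hoz]
    omega
  have cz2 : ∀ c ∈ Az, (fun j => (∑ a ∈ Az, r a c j) + ιz c j) ∈ F := by
    intro c hc
    have he : (fun j => (∑ a ∈ Az, r a c j) + ιz c j)
        = (fun j => (∑ a ∈ A, r a c j) + i c j) := by
      funext j
      have hs : (∑ a ∈ A \ Az, r a c j) + (∑ a ∈ Az, r a c j) = ∑ a ∈ A, r a c j :=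
        Finset.sum_sdiff hAzA
      simp only [hιz]
      omega
    rw [he]
    exact h2 c (hAzA hc)
  have cz3 : ∀ j, (∑ c ∈ Az, (ιz c j : ℤ)) - (∑ a ∈ Az, (oz a j : ℤ)) = qz j := fun j => rfl
  -- expansion of qy, qz in canonical atoms
  have eqy : ∀ j, qy j = ((∑ c ∈ Ay, (i c j : ℤ))
        + ((∑ a ∈ Az, ∑ c ∈ Ay, (r a c j : ℤ)) + (∑ a ∈ Au, ∑ c ∈ Ay, (r a c j : ℤ))))
      - ((∑ a ∈ Ay, (o a j : ℤ))
        + ((∑ a ∈ Ay, ∑ c ∈ Az, (r a c j : ℤ)) + (∑ a ∈ Ay, ∑ c ∈ Au, (r a c j : ℤ)))) := by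
    intro j
    rw [hqy]
    simp only [hιy, hoy]
    push_cast
    rw [Finset.sum_add_distrib, Finset.sum_add_distrib]
    congr 2
    · rw [Finset.sum_comm, hAyComp, Finset.sum_union hdisjZU]
    · rw [hAyComp]
      rw [show (∑ a ∈ Ay, ∑ c ∈ Az ∪ Au, (r a c j : ℤ))
          = ∑ a ∈ Ay, ((∑ c ∈ Az, (r a c j : ℤ)) + ∑ c ∈ Au, (r a c j : ℤ)) from
        Finset.sum_congr rfl fun a _ => Finset.sum_union hdisjZU]
      rw [Finset.sum_add_distrib]
  have eqz : ∀ j, qz j = ((∑ c ∈ Az, (i c j : ℤ))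
        + ((∑ a ∈ Ay, ∑ c ∈ Az, (r a c j : ℤ)) + (∑ a ∈ Au, ∑ c ∈ Az, (r a c j : ℤ))))
      - ((∑ a ∈ Az, (o a j : ℤ))
        + ((∑ a ∈ Az, ∑ c ∈ Ay, (r a c j : ℤ)) + (∑ a ∈ Az, ∑ c ∈ Au, (r a c j : ℤ)))) := by
    intro j
    rw [hqz]
    simp only [hιz, hoz]
    push_cast
    rw [Finset.sum_add_distrib, Finset.sum_add_distrib]
    congr 2
    · rw [Finset.sum_comm, hAzComp, Finset.sum_union hdisjYU]
    · rw [hAzComp]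
      rw [show (∑ a ∈ Az, ∑ c ∈ Ay ∪ Au, (r a c j : ℤ))
          = ∑ a ∈ Az, ((∑ c ∈ Ay, (r a c j : ℤ)) + ∑ c ∈ Au, (r a c j : ℤ)) from
        Finset.sum_congr rfl fun a _ => Finset.sum_union hdisjYU]
      rw [Finset.sum_add_distrib]
  -- membership in the recurrence set
  have hFmem : u ∈ A → ∃ p ∈ F, ∀ j, (p j : ℤ) = (v u j : ℤ) + q j - qy j - qz j := by
    intro hu
    have hAu1 : Au = {u} := by
      ext a
      rw [hAudef, Finset.mem_sdiff, Finset.mem_singleton]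
      constructor
      · rintro ⟨ha, hno⟩
        exact hcase a ha (fun h => hno (Finset.mem_union_left _ h))
          (fun h => hno (Finset.mem_union_right _ h))
      · rintro rfl
        exact ⟨hu, fun h => (Finset.mem_union.mp h).elim huAy huAz⟩
    refine ⟨fun j => (∑ a ∈ A, r a u j) + i u j, h2 u hu, fun j => ?_⟩
    have E_i : (∑ c ∈ A, (i c j : ℤ)) = (∑ c ∈ Ay, (i c j : ℤ)) + (∑ c ∈ Az, (i c j : ℤ))
        + (i u j : ℤ) := by
      rw [sum_split A Ay Az hAyA hAzA hdAB (fun c => (i c j : ℤ)), ← hAudef, hAu1,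
        Finset.sum_singleton]
    have E_o : (∑ a ∈ A, (o a j : ℤ)) = (∑ a ∈ Ay, (o a j : ℤ)) + (∑ a ∈ Az, (o a j : ℤ))
        + (o u j : ℤ) := by
      rw [sum_split A Ay Az hAyA hAzA hdAB (fun a => (o a j : ℤ)), ← hAudef, hAu1,
        Finset.sum_singleton]
    have E_ru : (∑ a ∈ A, (r a u j : ℤ)) = (∑ a ∈ Ay, (r a u j : ℤ))
        + (∑ a ∈ Az, (r a u j : ℤ)) + (r u u j : ℤ) := by
      rw [sum_split A Ay Az hAyA hAzA hdAB (fun a => (r a u j : ℤ)), ← hAudef, hAu1,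
        Finset.sum_singleton]
    have E_uc : (∑ c ∈ A, (r u c j : ℤ)) = (∑ c ∈ Ay, (r u c j : ℤ))
        + (∑ c ∈ Az, (r u c j : ℤ)) + (r u u j : ℤ) := by
      rw [sum_split A Ay Az hAyA hAzA hdAB (fun c => (r u c j : ℤ)), ← hAudef, hAu1,
        Finset.sum_singleton]
    have E_h1u : (∑ c ∈ A, (r u c j : ℤ)) + (o u j : ℤ) = (v u j : ℤ) := by
      exact_mod_cast congrArg (Nat.cast : ℕ → ℤ) (h1 u hu j)
    have hu1 : (∑ a ∈ Au, ∑ c ∈ Ay, (r a c j : ℤ)) = ∑ c ∈ Ay, (r u c j : ℤ) := by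
      rw [hAu1, Finset.sum_singleton]
    have hu2 : (∑ a ∈ Ay, ∑ c ∈ Au, (r a c j : ℤ)) = ∑ a ∈ Ay, (r a u j : ℤ) :=
      Finset.sum_congr rfl fun a _ => by rw [hAu1, Finset.sum_singleton]
    have hu3 : (∑ a ∈ Au, ∑ c ∈ Az, (r a c j : ℤ)) = ∑ c ∈ Az, (r u c j : ℤ) := by
      rw [hAu1, Finset.sum_singleton]
    have hu4 : (∑ a ∈ Az, ∑ c ∈ Au, (r a c j : ℤ)) = ∑ a ∈ Az, (r a u j : ℤ) :=
      Finset.sum_congr rfl fun a _ => by rw [hAu1, Finset.sum_singleton]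
    have hq3 := h3 j
    have hy' := eqy j
    have hz' := eqz j
    push_cast
    omega
  have hqmem : u ∉ A → ∀ j, q j = qy j + qz j := by
    intro hu j
    have hAu0 : Au = ∅ := by
      ext a
      rw [hAudef, Finset.mem_sdiff]
      simp only [Finset.notMem_empty, iff_false]
      rintro ⟨ha, hno⟩
      exact absurd ((hcase a ha (fun h => hno (Finset.mem_union_left _ h))
        (fun h => hno (Finset.mem_union_right _ h))) ▸ ha) hu
    have E_i : (∑ c ∈ A, (i c j : ℤ)) = (∑ c ∈ Ay, (i c j : ℤ)) + (∑ c ∈ Az, (i c j : ℤ)) := by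
      rw [sum_split A Ay Az hAyA hAzA hdAB (fun c => (i c j : ℤ)), ← hAudef, hAu0,
        Finset.sum_empty, add_zero]
    have E_o : (∑ a ∈ A, (o a j : ℤ)) = (∑ a ∈ Ay, (o a j : ℤ)) + (∑ a ∈ Az, (o a j : ℤ)) := by
      rw [sum_split A Ay Az hAyA hAzA hdAB (fun a => (o a j : ℤ)), ← hAudef, hAu0,
        Finset.sum_empty, add_zero]
    have z1 : (∑ a ∈ Au, ∑ c ∈ Ay, (r a c j : ℤ)) = 0 := by rw [hAu0]; simp
    have z2 : (∑ a ∈ Ay, ∑ c ∈ Au, (r a c j : ℤ)) = 0 := by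
      refine Finset.sum_eq_zero fun a _ => by rw [hAu0]; simp
    have z3 : (∑ a ∈ Au, ∑ c ∈ Az, (r a c j : ℤ)) = 0 := by rw [hAu0]; simp
    have z4 : (∑ a ∈ Az, ∑ c ∈ Au, (r a c j : ℤ)) = 0 := by
      refine Finset.sum_eq_zero fun a _ => by rw [hAu0]; simp
    have hq3 := h3 j
    have hy' := eqy j
    have hz' := eqz j
    omega
  show _ ≤ Cost ℓ d A u r i o
  refine le_trans (sInf_le ⟨qy, qz, hFmem, hqmem, rfl⟩) ?_
  have hCy : DPval ℓ d Ay v F y qy ≤ Cost ℓ d Ay y r ιy oy :=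
    DPval_le ℓ d Ay v F y qy r ιy oy cy1 cy2 cy3
  have hCz : DPval ℓ d Az v F z qz ≤ Cost ℓ d Az z r ιz oz :=
    DPval_le ℓ d Az v F z qz r ιz oz cz1 cz2 cz3
  have hTy : (d u y : ENNReal) * ((∑ j, (qy j).natAbs : ℕ) : ENNReal)
      ≤ ∑ j, ((d y u : ENNReal) * ((∑ c ∈ Ay, ιy c j : ℕ) : ENNReal)
            + (d y u : ENNReal) * ((∑ a ∈ Ay, oy a j : ℕ) : ENNReal)) := by
    rw [hsymm u y]
    push_cast
    rw [Finset.mul_sum]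
    refine Finset.sum_le_sum fun j _ => ?_
    rw [← mul_add]
    refine mul_le_mul_of_nonneg_left ?_ (zero_le)
    have hqj : qy j = ((∑ c ∈ Ay, ιy c j : ℕ) : ℤ) - ((∑ a ∈ Ay, oy a j : ℕ) : ℤ) := by
      rw [hqy]
      push_cast
      ring
    have hb : (qy j).natAbs ≤ (∑ c ∈ Ay, ιy c j) + (∑ a ∈ Ay, oy a j) := by omega
    exact_mod_cast hb
  have hTz : (d u z : ENNReal) * ((∑ j, (qz j).natAbs : ℕ) : ENNReal)
      ≤ ∑ j, ((d z u : ENNReal) * ((∑ c ∈ Az, ιz c j : ℕ) : ENNReal)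
            + (d z u : ENNReal) * ((∑ a ∈ Az, oz a j : ℕ) : ENNReal)) := by
    rw [hsymm u z]
    push_cast
    rw [Finset.mul_sum]
    refine Finset.sum_le_sum fun j _ => ?_
    rw [← mul_add]
    refine mul_le_mul_of_nonneg_left ?_ (zero_le)
    have hqj : qz j = ((∑ c ∈ Az, ιz c j : ℕ) : ℤ) - ((∑ a ∈ Az, oz a j : ℕ) : ℤ) := by
      rw [hqz]
      push_cast
      ring
    have hb : (qz j).natAbs ≤ (∑ c ∈ Az, ιz c j) + (∑ a ∈ Az, oz a j) := by omega
    exact_mod_cast hb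
  have costsplit : Cost ℓ d A u r i o = Cost ℓ d Ay y r ιy oy + Cost ℓ d Az z r ιz oz
      + (∑ j, ((d y u : ENNReal) * ((∑ c ∈ Ay, ιy c j : ℕ) : ENNReal)
            + (d y u : ENNReal) * ((∑ a ∈ Ay, oy a j : ℕ) : ENNReal)))
      + (∑ j, ((d z u : ENNReal) * ((∑ c ∈ Az, ιz c j : ℕ) : ENNReal)
            + (d z u : ENNReal) * ((∑ a ∈ Az, oz a j : ℕ) : ENNReal))) := by
    rw [cost_eq ℓ d A u, cost_eq ℓ d Ay y, cost_eq ℓ d Az z, ← Finset.sum_add_distrib,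
      ← Finset.sum_add_distrib, ← Finset.sum_add_distrib]
    refine Finset.sum_congr rfl fun j _ => ?_
    -- coefficient split facts
    have hcyz : ∀ a ∈ Ay, ∀ c ∈ Az, (d a c : ENNReal)
        = (d a y : ENNReal) + (d y u : ENNReal) + (d c z : ENNReal) + (d z u : ENNReal) := by
      intro a ha c hc
      have haVy : a ∈ Vy := (Finset.mem_inter.mp ha).2
      have hcVz : c ∈ Vz := (Finset.mem_inter.mp hc).2
      have : d a c = d a y + d y u + (d c z + d z u) := by
        rw [htyz a haVy c hcVz, hty a haVy, hsymm u c, htz c hcVz]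
      rw [this]
      push_cast
      ring
    have hczy : ∀ a ∈ Az, ∀ c ∈ Ay, (d a c : ENNReal)
        = (d c y : ENNReal) + (d y u : ENNReal) + (d a z : ENNReal) + (d z u : ENNReal) := by
      intro a ha c hc
      have haVz : a ∈ Vz := (Finset.mem_inter.mp ha).2
      have hcVy : c ∈ Vy := (Finset.mem_inter.mp hc).2
      have : d a c = d c y + d y u + (d a z + d z u) := by
        rw [hsymm a c, htyz c hcVy a haVz, hty c hcVy, hsymm u a, htz a haVz]
      rw [this]
      push_cast
      ring
    have hcy : ∀ a ∈ Ay, (d a u : ENNReal) = (d a y : ENNReal) + (d y u : ENNReal) := by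
      intro a ha
      have haVy : a ∈ Vy := (Finset.mem_inter.mp ha).2
      rw [hty a haVy]
      push_cast
      ring
    have hcz : ∀ a ∈ Az, (d a u : ENNReal) = (d a z : ENNReal) + (d z u : ENNReal) := by
      intro a ha
      have haVz : a ∈ Vz := (Finset.mem_inter.mp ha).2
      rw [htz a haVz]
      push_cast
      ring
    -- LHS r-part
    have EY : (∑ a ∈ Ay, ∑ c ∈ A, (d a c : ENNReal) * ((r a c j : ℕ) : ENNReal))
        = (∑ a ∈ Ay, ∑ c ∈ Ay, (d a c : ENNReal) * ((r a c j : ℕ) : ENNReal))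
          + ((∑ a ∈ Ay, ∑ c ∈ Az, (d a y : ENNReal) * ((r a c j : ℕ) : ENNReal))
            + (∑ a ∈ Ay, ∑ c ∈ Az, (d y u : ENNReal) * ((r a c j : ℕ) : ENNReal))
            + (∑ a ∈ Ay, ∑ c ∈ Az, (d c z : ENNReal) * ((r a c j : ℕ) : ENNReal))
            + (∑ a ∈ Ay, ∑ c ∈ Az, (d z u : ENNReal) * ((r a c j : ℕ) : ENNReal)))
          + ((∑ a ∈ Ay, ∑ c ∈ Au, (d a y : ENNReal) * ((r a c j : ℕ) : ENNReal))
            + (∑ a ∈ Ay, ∑ c ∈ Au, (d y u : ENNReal) * ((r a c j : ℕ) : ENNReal))) := by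
      have hper : ∀ a ∈ Ay, (∑ c ∈ A, (d a c : ENNReal) * ((r a c j : ℕ) : ENNReal))
          = (∑ c ∈ Ay, (d a c : ENNReal) * ((r a c j : ℕ) : ENNReal))
            + ((∑ c ∈ Az, (d a y : ENNReal) * ((r a c j : ℕ) : ENNReal))
              + (∑ c ∈ Az, (d y u : ENNReal) * ((r a c j : ℕ) : ENNReal))
              + (∑ c ∈ Az, (d c z : ENNReal) * ((r a c j : ℕ) : ENNReal))
              + (∑ c ∈ Az, (d z u : ENNReal) * ((r a c j : ℕ) : ENNReal)))
            + ((∑ c ∈ Au, (d a y : ENNReal) * ((r a c j : ℕ) : ENNReal))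
              + (∑ c ∈ Au, (d y u : ENNReal) * ((r a c j : ℕ) : ENNReal))) := by
        intro a ha
        rw [sum_split A Ay Az hAyA hAzA hdAB
          (fun c => (d a c : ENNReal) * ((r a c j : ℕ) : ENNReal)), ← hAudef]
        congr 1
        · congr 1
          rw [show (∑ c ∈ Az, (d a c : ENNReal) * ((r a c j : ℕ) : ENNReal))
              = ∑ c ∈ Az, ((d a y : ENNReal) * ((r a c j : ℕ) : ENNReal)
                + (d y u : ENNReal) * ((r a c j : ℕ) : ENNReal)
                + (d c z : ENNReal) * ((r a c j : ℕ) : ENNReal)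
                + (d z u : ENNReal) * ((r a c j : ℕ) : ENNReal)) from
            Finset.sum_congr rfl fun c hc => by rw [hcyz a ha c hc]; ring]
          rw [Finset.sum_add_distrib, Finset.sum_add_distrib, Finset.sum_add_distrib]
        · rw [show (∑ c ∈ Au, (d a c : ENNReal) * ((r a c j : ℕ) : ENNReal))
              = ∑ c ∈ Au, ((d a y : ENNReal) * ((r a c j : ℕ) : ENNReal)
                + (d y u : ENNReal) * ((r a c j : ℕ) : ENNReal)) from
            Finset.sum_congr rfl fun c hc => by
              rw [hmemAu c hc, hcy a ha]; ring]
          rw [Finset.sum_add_distrib]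
      rw [Finset.sum_congr rfl hper]
      simp only [Finset.sum_add_distrib]
    have EZ : (∑ a ∈ Az, ∑ c ∈ A, (d a c : ENNReal) * ((r a c j : ℕ) : ENNReal))
        = ((∑ a ∈ Az, ∑ c ∈ Ay, (d c y : ENNReal) * ((r a c j : ℕ) : ENNReal))
            + (∑ a ∈ Az, ∑ c ∈ Ay, (d y u : ENNReal) * ((r a c j : ℕ) : ENNReal))
            + (∑ a ∈ Az, ∑ c ∈ Ay, (d a z : ENNReal) * ((r a c j : ℕ) : ENNReal))
            + (∑ a ∈ Az, ∑ c ∈ Ay, (d z u : ENNReal) * ((r a c j : ℕ) : ENNReal)))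
          + (∑ a ∈ Az, ∑ c ∈ Az, (d a c : ENNReal) * ((r a c j : ℕ) : ENNReal))
          + ((∑ a ∈ Az, ∑ c ∈ Au, (d a z : ENNReal) * ((r a c j : ℕ) : ENNReal))
            + (∑ a ∈ Az, ∑ c ∈ Au, (d z u : ENNReal) * ((r a c j : ℕ) : ENNReal))) := by
      have hper : ∀ a ∈ Az, (∑ c ∈ A, (d a c : ENNReal) * ((r a c j : ℕ) : ENNReal))
          = ((∑ c ∈ Ay, (d c y : ENNReal) * ((r a c j : ℕ) : ENNReal))
              + (∑ c ∈ Ay, (d y u : ENNReal) * ((r a c j : ℕ) : ENNReal))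
              + (∑ c ∈ Ay, (d a z : ENNReal) * ((r a c j : ℕ) : ENNReal))
              + (∑ c ∈ Ay, (d z u : ENNReal) * ((r a c j : ℕ) : ENNReal)))
            + (∑ c ∈ Az, (d a c : ENNReal) * ((r a c j : ℕ) : ENNReal))
            + ((∑ c ∈ Au, (d a z : ENNReal) * ((r a c j : ℕ) : ENNReal))
              + (∑ c ∈ Au, (d z u : ENNReal) * ((r a c j : ℕ) : ENNReal))) := by
        intro a ha
        rw [sum_split A Ay Az hAyA hAzA hdAB
          (fun c => (d a c : ENNReal) * ((r a c j : ℕ) : ENNReal)), ← hAudef]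
        congr 1
        · congr 1
          rw [show (∑ c ∈ Ay, (d a c : ENNReal) * ((r a c j : ℕ) : ENNReal))
              = ∑ c ∈ Ay, ((d c y : ENNReal) * ((r a c j : ℕ) : ENNReal)
                + (d y u : ENNReal) * ((r a c j : ℕ) : ENNReal)
                + (d a z : ENNReal) * ((r a c j : ℕ) : ENNReal)
                + (d z u : ENNReal) * ((r a c j : ℕ) : ENNReal)) from
            Finset.sum_congr rfl fun c hc => by rw [hczy a ha c hc]; ring]
          rw [Finset.sum_add_distrib, Finset.sum_add_distrib, Finset.sum_add_distrib]
        · rw [show (∑ c ∈ Au, (d a c : ENNReal) * ((r a c j : ℕ) : ENNReal))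
              = ∑ c ∈ Au, ((d a z : ENNReal) * ((r a c j : ℕ) : ENNReal)
                + (d z u : ENNReal) * ((r a c j : ℕ) : ENNReal)) from
            Finset.sum_congr rfl fun c hc => by
              rw [hmemAu c hc, hcz a ha]; ring]
          rw [Finset.sum_add_distrib]
      rw [Finset.sum_congr rfl hper]
      simp only [Finset.sum_add_distrib]
    have EU : (∑ a ∈ Au, ∑ c ∈ A, (d a c : ENNReal) * ((r a c j : ℕ) : ENNReal))
        = ((∑ a ∈ Au, ∑ c ∈ Ay, (d c y : ENNReal) * ((r a c j : ℕ) : ENNReal))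
            + (∑ a ∈ Au, ∑ c ∈ Ay, (d y u : ENNReal) * ((r a c j : ℕ) : ENNReal)))
          + ((∑ a ∈ Au, ∑ c ∈ Az, (d c z : ENNReal) * ((r a c j : ℕ) : ENNReal))
            + (∑ a ∈ Au, ∑ c ∈ Az, (d z u : ENNReal) * ((r a c j : ℕ) : ENNReal))) := by
      have hper : ∀ a ∈ Au, (∑ c ∈ A, (d a c : ENNReal) * ((r a c j : ℕ) : ENNReal))
          = ((∑ c ∈ Ay, (d c y : ENNReal) * ((r a c j : ℕ) : ENNReal))
              + (∑ c ∈ Ay, (d y u : ENNReal) * ((r a c j : ℕ) : ENNReal)))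
            + ((∑ c ∈ Az, (d c z : ENNReal) * ((r a c j : ℕ) : ENNReal))
              + (∑ c ∈ Az, (d z u : ENNReal) * ((r a c j : ℕ) : ENNReal))) := by
        intro a ha
        rw [sum_split A Ay Az hAyA hAzA hdAB
          (fun c => (d a c : ENNReal) * ((r a c j : ℕ) : ENNReal)), ← hAudef]
        rw [show (∑ c ∈ Au, (d a c : ENNReal) * ((r a c j : ℕ) : ENNReal)) = 0 from
          Finset.sum_eq_zero fun c hc => by
            rw [hmemAu c hc, hmemAu a ha, hself]
            simp]
        rw [add_zero]
        congr 1
        · rw [show (∑ c ∈ Ay, (d a c : ENNReal) * ((r a c j : ℕ) : ENNReal))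
              = ∑ c ∈ Ay, ((d c y : ENNReal) * ((r a c j : ℕ) : ENNReal)
                + (d y u : ENNReal) * ((r a c j : ℕ) : ENNReal)) from
            Finset.sum_congr rfl fun c hc => by
              rw [hmemAu a ha, hsymm u c, hcy c hc]; ring]
          rw [Finset.sum_add_distrib]
        · rw [show (∑ c ∈ Az, (d a c : ENNReal) * ((r a c j : ℕ) : ENNReal))
              = ∑ c ∈ Az, ((d c z : ENNReal) * ((r a c j : ℕ) : ENNReal)
                + (d z u : ENNReal) * ((r a c j : ℕ) : ENNReal)) from
            Finset.sum_congr rfl fun c hc => by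
              rw [hmemAu a ha, hsymm u c, hcz c hc]; ring]
          rw [Finset.sum_add_distrib]
      rw [Finset.sum_congr rfl hper]
      simp only [Finset.sum_add_distrib]
    have E_i : (∑ c ∈ A, (d c u : ENNReal) * ((i c j : ℕ) : ENNReal))
        = ((∑ c ∈ Ay, (d c y : ENNReal) * ((i c j : ℕ) : ENNReal))
            + (∑ c ∈ Ay, (d y u : ENNReal) * ((i c j : ℕ) : ENNReal)))
          + ((∑ c ∈ Az, (d c z : ENNReal) * ((i c j : ℕ) : ENNReal))
            + (∑ c ∈ Az, (d z u : ENNReal) * ((i c j : ℕ) : ENNReal))) := by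
      rw [sum_split A Ay Az hAyA hAzA hdAB
        (fun c => (d c u : ENNReal) * ((i c j : ℕ) : ENNReal)), ← hAudef]
      rw [show (∑ c ∈ Au, (d c u : ENNReal) * ((i c j : ℕ) : ENNReal)) = 0 from
        Finset.sum_eq_zero fun c hc => by rw [hmemAu c hc, hself]; simp]
      rw [add_zero]
      congr 1
      · rw [show (∑ c ∈ Ay, (d c u : ENNReal) * ((i c j : ℕ) : ENNReal))
            = ∑ c ∈ Ay, ((d c y : ENNReal) * ((i c j : ℕ) : ENNReal)
              + (d y u : ENNReal) * ((i c j : ℕ) : ENNReal)) from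
          Finset.sum_congr rfl fun c hc => by rw [hcy c hc]; ring]
        rw [Finset.sum_add_distrib]
      · rw [show (∑ c ∈ Az, (d c u : ENNReal) * ((i c j : ℕ) : ENNReal))
            = ∑ c ∈ Az, ((d c z : ENNReal) * ((i c j : ℕ) : ENNReal)
              + (d z u : ENNReal) * ((i c j : ℕ) : ENNReal)) from
          Finset.sum_congr rfl fun c hc => by rw [hcz c hc]; ring]
        rw [Finset.sum_add_distrib]
    have E_o : (∑ a ∈ A, (d a u : ENNReal) * ((o a j : ℕ) : ENNReal))
        = ((∑ a ∈ Ay, (d a y : ENNReal) * ((o a j : ℕ) : ENNReal))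
            + (∑ a ∈ Ay, (d y u : ENNReal) * ((o a j : ℕ) : ENNReal)))
          + ((∑ a ∈ Az, (d a z : ENNReal) * ((o a j : ℕ) : ENNReal))
            + (∑ a ∈ Az, (d z u : ENNReal) * ((o a j : ℕ) : ENNReal))) := by
      rw [sum_split A Ay Az hAyA hAzA hdAB
        (fun a => (d a u : ENNReal) * ((o a j : ℕ) : ENNReal)), ← hAudef]
      rw [show (∑ a ∈ Au, (d a u : ENNReal) * ((o a j : ℕ) : ENNReal)) = 0 from
        Finset.sum_eq_zero fun a ha => by rw [hmemAu a ha, hself]; simp]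
      rw [add_zero]
      congr 1
      · rw [show (∑ a ∈ Ay, (d a u : ENNReal) * ((o a j : ℕ) : ENNReal))
            = ∑ a ∈ Ay, ((d a y : ENNReal) * ((o a j : ℕ) : ENNReal)
              + (d y u : ENNReal) * ((o a j : ℕ) : ENNReal)) from
          Finset.sum_congr rfl fun a ha => by rw [hcy a ha]; ring]
        rw [Finset.sum_add_distrib]
      · rw [show (∑ a ∈ Az, (d a u : ENNReal) * ((o a j : ℕ) : ENNReal))
            = ∑ a ∈ Az, ((d a z : ENNReal) * ((o a j : ℕ) : ENNReal)
              + (d z u : ENNReal) * ((o a j : ℕ) : ENNReal)) from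
          Finset.sum_congr rfl fun a ha => by rw [hcz a ha]; ring]
        rw [Finset.sum_add_distrib]
    -- RHS expansions
    have D1y : (∑ c ∈ Ay, (d c y : ENNReal) * ((ιy c j : ℕ) : ENNReal))
        = (∑ c ∈ Ay, (d c y : ENNReal) * ((i c j : ℕ) : ENNReal))
          + ((∑ a ∈ Az, ∑ c ∈ Ay, (d c y : ENNReal) * ((r a c j : ℕ) : ENNReal))
            + (∑ a ∈ Au, ∑ c ∈ Ay, (d c y : ENNReal) * ((r a c j : ℕ) : ENNReal))) := by
      rw [show (∑ c ∈ Ay, (d c y : ENNReal) * ((ιy c j : ℕ) : ENNReal))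
          = ∑ c ∈ Ay, ((d c y : ENNReal) * ((i c j : ℕ) : ENNReal)
            + ∑ a ∈ A \ Ay, (d c y : ENNReal) * ((r a c j : ℕ) : ENNReal)) from
        Finset.sum_congr rfl fun c _ => by
          simp only [hιy]
          push_cast
          rw [mul_add, Finset.mul_sum]]
      rw [Finset.sum_add_distrib]
      congr 1
      rw [Finset.sum_comm, hAyComp, Finset.sum_union hdisjZU]
    have D2y : (d y u : ENNReal) * ((∑ c ∈ Ay, ιy c j : ℕ) : ENNReal)
        = (∑ c ∈ Ay, (d y u : ENNReal) * ((i c j : ℕ) : ENNReal))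
          + ((∑ a ∈ Az, ∑ c ∈ Ay, (d y u : ENNReal) * ((r a c j : ℕ) : ENNReal))
            + (∑ a ∈ Au, ∑ c ∈ Ay, (d y u : ENNReal) * ((r a c j : ℕ) : ENNReal))) := by
      push_cast
      rw [Finset.mul_sum]
      rw [show (∑ c ∈ Ay, (d y u : ENNReal) * ((ιy c j : ℕ) : ENNReal))
          = ∑ c ∈ Ay, ((d y u : ENNReal) * ((i c j : ℕ) : ENNReal)
            + ∑ a ∈ A \ Ay, (d y u : ENNReal) * ((r a c j : ℕ) : ENNReal)) from
        Finset.sum_congr rfl fun c _ => by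
          simp only [hιy]
          push_cast
          rw [mul_add, Finset.mul_sum]]
      rw [Finset.sum_add_distrib]
      congr 1
      rw [Finset.sum_comm, hAyComp, Finset.sum_union hdisjZU]
    have D3y : (∑ a ∈ Ay, (d a y : ENNReal) * ((oy a j : ℕ) : ENNReal))
        = (∑ a ∈ Ay, (d a y : ENNReal) * ((o a j : ℕ) : ENNReal))
          + ((∑ a ∈ Ay, ∑ c ∈ Az, (d a y : ENNReal) * ((r a c j : ℕ) : ENNReal))
            + (∑ a ∈ Ay, ∑ c ∈ Au, (d a y : ENNReal) * ((r a c j : ℕ) : ENNReal))) := by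
      rw [show (∑ a ∈ Ay, (d a y : ENNReal) * ((oy a j : ℕ) : ENNReal))
          = ∑ a ∈ Ay, ((d a y : ENNReal) * ((o a j : ℕ) : ENNReal)
            + ((∑ c ∈ Az, (d a y : ENNReal) * ((r a c j : ℕ) : ENNReal))
              + (∑ c ∈ Au, (d a y : ENNReal) * ((r a c j : ℕ) : ENNReal)))) from
        Finset.sum_congr rfl fun a _ => by
          simp only [hoy]
          push_cast
          rw [mul_add, Finset.mul_sum, hAyComp, Finset.sum_union hdisjZU]]
      rw [Finset.sum_add_distrib, Finset.sum_add_distrib]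
    have D4y : (d y u : ENNReal) * ((∑ a ∈ Ay, oy a j : ℕ) : ENNReal)
        = (∑ a ∈ Ay, (d y u : ENNReal) * ((o a j : ℕ) : ENNReal))
          + ((∑ a ∈ Ay, ∑ c ∈ Az, (d y u : ENNReal) * ((r a c j : ℕ) : ENNReal))
            + (∑ a ∈ Ay, ∑ c ∈ Au, (d y u : ENNReal) * ((r a c j : ℕ) : ENNReal))) := by
      push_cast
      rw [Finset.mul_sum]
      rw [show (∑ a ∈ Ay, (d y u : ENNReal) * ((oy a j : ℕ) : ENNReal))
          = ∑ a ∈ Ay, ((d y u : ENNReal) * ((o a j : ℕ) : ENNReal)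
            + ((∑ c ∈ Az, (d y u : ENNReal) * ((r a c j : ℕ) : ENNReal))
              + (∑ c ∈ Au, (d y u : ENNReal) * ((r a c j : ℕ) : ENNReal)))) from
        Finset.sum_congr rfl fun a _ => by
          simp only [hoy]
          push_cast
          rw [mul_add, Finset.mul_sum, hAyComp, Finset.sum_union hdisjZU]]
      rw [Finset.sum_add_distrib, Finset.sum_add_distrib]
    have D1z : (∑ c ∈ Az, (d c z : ENNReal) * ((ιz c j : ℕ) : ENNReal))
        = (∑ c ∈ Az, (d c z : ENNReal) * ((i c j : ℕ) : ENNReal))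
          + ((∑ a ∈ Ay, ∑ c ∈ Az, (d c z : ENNReal) * ((r a c j : ℕ) : ENNReal))
            + (∑ a ∈ Au, ∑ c ∈ Az, (d c z : ENNReal) * ((r a c j : ℕ) : ENNReal))) := by
      rw [show (∑ c ∈ Az, (d c z : ENNReal) * ((ιz c j : ℕ) : ENNReal))
          = ∑ c ∈ Az, ((d c z : ENNReal) * ((i c j : ℕ) : ENNReal)
            + ∑ a ∈ A \ Az, (d c z : ENNReal) * ((r a c j : ℕ) : ENNReal)) from
        Finset.sum_congr rfl fun c _ => by
          simp only [hιz]
          push_cast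
          rw [mul_add, Finset.mul_sum]]
      rw [Finset.sum_add_distrib]
      congr 1
      rw [Finset.sum_comm, hAzComp, Finset.sum_union hdisjYU]
    have D2z : (d z u : ENNReal) * ((∑ c ∈ Az, ιz c j : ℕ) : ENNReal)
        = (∑ c ∈ Az, (d z u : ENNReal) * ((i c j : ℕ) : ENNReal))
          + ((∑ a ∈ Ay, ∑ c ∈ Az, (d z u : ENNReal) * ((r a c j : ℕ) : ENNReal))
            + (∑ a ∈ Au, ∑ c ∈ Az, (d z u : ENNReal) * ((r a c j : ℕ) : ENNReal))) := by
      push_cast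
      rw [Finset.mul_sum]
      rw [show (∑ c ∈ Az, (d z u : ENNReal) * ((ιz c j : ℕ) : ENNReal))
          = ∑ c ∈ Az, ((d z u : ENNReal) * ((i c j : ℕ) : ENNReal)
            + ∑ a ∈ A \ Az, (d z u : ENNReal) * ((r a c j : ℕ) : ENNReal)) from
        Finset.sum_congr rfl fun c _ => by
          simp only [hιz]
          push_cast
          rw [mul_add, Finset.mul_sum]]
      rw [Finset.sum_add_distrib]
      congr 1
      rw [Finset.sum_comm, hAzComp, Finset.sum_union hdisjYU]
    have D3z : (∑ a ∈ Az, (d a z : ENNReal) * ((oz a j : ℕ) : ENNReal))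
        = (∑ a ∈ Az, (d a z : ENNReal) * ((o a j : ℕ) : ENNReal))
          + ((∑ a ∈ Az, ∑ c ∈ Ay, (d a z : ENNReal) * ((r a c j : ℕ) : ENNReal))
            + (∑ a ∈ Az, ∑ c ∈ Au, (d a z : ENNReal) * ((r a c j : ℕ) : ENNReal))) := by
      rw [show (∑ a ∈ Az, (d a z : ENNReal) * ((oz a j : ℕ) : ENNReal))
          = ∑ a ∈ Az, ((d a z : ENNReal) * ((o a j : ℕ) : ENNReal)
            + ((∑ c ∈ Ay, (d a z : ENNReal) * ((r a c j : ℕ) : ENNReal))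
              + (∑ c ∈ Au, (d a z : ENNReal) * ((r a c j : ℕ) : ENNReal)))) from
        Finset.sum_congr rfl fun a _ => by
          simp only [hoz]
          push_cast
          rw [mul_add, Finset.mul_sum, hAzComp, Finset.sum_union hdisjYU]]
      rw [Finset.sum_add_distrib, Finset.sum_add_distrib]
    have D4z : (d z u : ENNReal) * ((∑ a ∈ Az, oz a j : ℕ) : ENNReal)
        = (∑ a ∈ Az, (d z u : ENNReal) * ((o a j : ℕ) : ENNReal))
          + ((∑ a ∈ Az, ∑ c ∈ Ay, (d z u : ENNReal) * ((r a c j : ℕ) : ENNReal))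
            + (∑ a ∈ Az, ∑ c ∈ Au, (d z u : ENNReal) * ((r a c j : ℕ) : ENNReal))) := by
      push_cast
      rw [Finset.mul_sum]
      rw [show (∑ a ∈ Az, (d z u : ENNReal) * ((oz a j : ℕ) : ENNReal))
          = ∑ a ∈ Az, ((d z u : ENNReal) * ((o a j : ℕ) : ENNReal)
            + ((∑ c ∈ Ay, (d z u : ENNReal) * ((r a c j : ℕ) : ENNReal))
              + (∑ c ∈ Au, (d z u : ENNReal) * ((r a c j : ℕ) : ENNReal)))) from
        Finset.sum_congr rfl fun a _ => by
          simp only [hoz]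
          push_cast
          rw [mul_add, Finset.mul_sum, hAzComp, Finset.sum_union hdisjYU]]
      rw [Finset.sum_add_distrib, Finset.sum_add_distrib]
    rw [sum_split A Ay Az hAyA hAzA hdAB
      (fun a => ∑ c ∈ A, (d a c : ENNReal) * ((r a c j : ℕ) : ENNReal)), ← hAudef]
    rw [EY, EZ, EU, E_i, E_o, D1y, D2y, D3y, D4y, D1z, D2z, D3z, D4z]
    ring
  calc DPval ℓ d Ay v F y qy + DPval ℓ d Az v F z qz
        + (d u y : ENNReal) * ((∑ j, (qy j).natAbs : ℕ) : ENNReal)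
        + (d u z : ENNReal) * ((∑ j, (qz j).natAbs : ℕ) : ENNReal)
      ≤ Cost ℓ d Ay y r ιy oy + Cost ℓ d Az z r ιz oz
        + (∑ j, ((d y u : ENNReal) * ((∑ c ∈ Ay, ιy c j : ℕ) : ENNReal)
              + (d y u : ENNReal) * ((∑ a ∈ Ay, oy a j : ℕ) : ENNReal)))
        + (∑ j, ((d z u : ENNReal) * ((∑ c ∈ Az, ιz c j : ℕ) : ENNReal)
              + (d z u : ENNReal) * ((∑ a ∈ Az, oz a j : ℕ) : ENNReal))) :=
        add_le_add (add_le_add (add_le_add hCy hCz) hTy) hTz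
    _ = Cost ℓ d A u r i o := costsplit.symm
/-- Correctness of the DP recurrence (Lemma 3.4, recursive case): for a node `u` with
children `y` and `z` whose subtrees have vertex sets `Vy` and `Vz`, the value `M[u,q]`
equals the minimum over feasible net-import splits `(q_y, q_z)` — requiring
`v(u) + q − q_y − q_z ∈ F` when `u` is non-Steiner, and `q = q_y + q_z` when `u` is
Steiner — of `M[y,q_y] + M[z,q_z] + d(u,y)·‖q_y‖₁ + d(u,z)·‖q_z‖₁`. -/
theorem DP_recurrence {V : Type} [Fintype V] [DecidableEq V] (ℓ : ℕ)
    (d : V → V → NNReal) (v : V → Fin ℓ → ℕ) (F : Set (Fin ℓ → ℕ))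
    (u y z : V) (Vy Vz : Finset V) (A : Finset V)
    (hy : y ∈ Vy) (hz : z ∈ Vz) (hdisj : Disjoint Vy Vz)
    (huy : u ∉ Vy) (huz : u ∉ Vz)
    (hA : A ⊆ insert u (Vy ∪ Vz))
    (hsymm : ∀ a b, d a b = d b a) (hself : ∀ a, d a a = 0)
    (htri : ∀ a b c, d a c ≤ d a b + d b c)
    (hty : ∀ a ∈ Vy, d a u = d a y + d y u)
    (htz : ∀ b ∈ Vz, d b u = d b z + d z u)
    (htyz : ∀ a ∈ Vy, ∀ b ∈ Vz, d a b = d a u + d u b)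
    (hvSteiner : u ∉ A → v u = 0)
    (q : Fin ℓ → ℤ) :
    DPval ℓ d A v F u q =
      sInf { x : ENNReal | ∃ qy qz : Fin ℓ → ℤ,
        (u ∈ A → ∃ p ∈ F, ∀ j, (p j : ℤ) = (v u j : ℤ) + q j - qy j - qz j) ∧
        (u ∉ A → ∀ j, q j = qy j + qz j) ∧
        x = DPval ℓ d (A ∩ Vy) v F y qy + DPval ℓ d (A ∩ Vz) v F z qz
            + (d u y : ENNReal) * (∑ j, (qy j).natAbs : ℕ)
            + (d u z : ENNReal) * (∑ j, (qz j).natAbs : ℕ) } := by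
  refine le_antisymm ?_
    (dir2 ℓ d v F u y z Vy Vz A hy hz hdisj huy huz hA hsymm hself hty htz htyz q)
  refine le_sInf ?_
  rintro x ⟨qy, qz, hFu, hqu, rfl⟩
  exact dir1 ℓ d v F u y z Vy Vz A hy hz hdisj huy huz hA hsymm hself htri hty htz
    q qy qz hFu hqu
end
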